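/- For a ranking r of n items and its reversal s, the area under the Jaccard curve AUC(r,s) = (1/(n−1))·((j_1 + j_n)/2 + Σ_{k=2}^{n−1} j_k), where j_k = J(r,s,k), equals (n² + 1)/(4n(n−1)) if n is odd, and n/(4(n−1)) if n is even. -/
import Mathlib


open Finset Filter
open scoped Classical

noncomputable def rankOf {n : ℕ} (r : Fin n → ℝ) (i : Fin n) : ℕ :=
  (Finset.univ.filter (fun j => r i ≤ r j)).card

noncomputable def topk {n : ℕ} (r : Fin n → ℝ) (k : ℕ) : Finset (Fin n) :=
  Finset.univ.filter (fun i => rankOf r i ≤ k)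

noncomputable def jac {n : ℕ} (r s : Fin n → ℝ) (k : ℕ) : ℝ :=
  ((topk r k ∩ topk s k).card : ℝ) / ((topk r k ∪ topk s k).card : ℝ)

noncomputable def kthScore {n : ℕ} (r : Fin n → ℝ) (k : ℕ) : ℝ :=
  if h : (topk r k).Nonempty then (topk r k).inf' h r else 0

noncomputable def fmu {n : ℕ} (r : Fin n → ℝ) (k : ℕ) (i : Fin n) : ℝ :=
  if i ∈ topk r k then 1 else r i / kthScore r k

noncomputable def fuji {n : ℕ} (r s : Fin n → ℝ) (k : ℕ) : ℝ :=
  (∑ x ∈ topk r k ∪ topk s k, min (fmu r k x) (fmu s k x)) /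
  (∑ x ∈ topk r k ∪ topk s k, max (fmu r k x) (fmu s k x))

lemma rankOf_lt_of_lt {n : ℕ} {r : Fin n → ℝ} {i j : Fin n} (h : r i < r j) :
    rankOf r j < rankOf r i := by
  apply Finset.card_lt_card
  rw [Finset.ssubset_def]
  constructor
  · intro a ha
    simp only [Finset.mem_filter, Finset.mem_univ, true_and] at ha ⊢
    exact h.le.trans ha
  · intro hsub
    have hi : i ∈ Finset.univ.filter (fun a => r i ≤ r a) := by simp
    have := hsub hi
    simp only [Finset.mem_filter, Finset.mem_univ, true_and] at this
    exact absurd this (not_le.mpr h)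

lemma rankOf_injective {n : ℕ} {r : Fin n → ℝ} (hr : Function.Injective r) :
    Function.Injective (rankOf r) := by
  intro i j h
  by_contra hne
  have hrne : r i ≠ r j := fun e => hne (hr e)
  rcases lt_or_gt_of_ne hrne with hlt | hlt
  · exact absurd h (rankOf_lt_of_lt hlt).ne'
  · exact absurd h (rankOf_lt_of_lt hlt).ne

lemma rankOf_pos {n : ℕ} (r : Fin n → ℝ) (i : Fin n) : 1 ≤ rankOf r i :=
  Finset.card_pos.mpr ⟨i, by simp [rankOf]⟩

lemma rankOf_le {n : ℕ} (r : Fin n → ℝ) (i : Fin n) : rankOf r i ≤ n := by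
  have := Finset.card_filter_le Finset.univ (fun j => r i ≤ r j)
  simpa [rankOf] using this

lemma rankOf_image {n : ℕ} {r : Fin n → ℝ} (hr : Function.Injective r) :
    Finset.image (rankOf r) Finset.univ = Finset.Icc 1 n := by
  apply Finset.eq_of_subset_of_card_le
  · intro a ha
    simp only [Finset.mem_image, Finset.mem_univ, true_and] at ha
    obtain ⟨i, rfl⟩ := ha
    simp only [Finset.mem_Icc]
    exact ⟨rankOf_pos r i, rankOf_le r i⟩
  · rw [Finset.card_image_of_injective _ (rankOf_injective hr)]
    simp [Nat.card_Icc]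

lemma card_filter_rank {n : ℕ} {r : Fin n → ℝ} (hr : Function.Injective r)
    (p : ℕ → Prop) [DecidablePred p] :
    (Finset.univ.filter (fun i => p (rankOf r i))).card
      = ((Finset.Icc 1 n).filter p).card := by
  rw [← rankOf_image hr, Finset.filter_image,
    Finset.card_image_of_injective _ (rankOf_injective hr)]

lemma Fsum : ∀ m : ℕ, (∑ i ∈ Finset.range m, (2 * i + 2 - m)) = (m + 1) ^ 2 / 4 := by
  intro m
  induction m using Nat.strong_induction_on with
  | _ m ih =>
    match m, ih with
    | 0, _ => simp
    | 1, _ => simp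
    | (m + 2), ih =>
      rw [Finset.sum_range_succ']
      have h0 : 2 * 0 + 2 - (m + 2) = 0 := by omega
      rw [h0, add_zero]
      have hcongr : ∀ i ∈ Finset.range (m + 1),
          2 * (i + 1) + 2 - (m + 2) = 2 * i + 2 - m := fun i _ => by omega
      rw [Finset.sum_congr rfl hcongr, Finset.sum_range_succ,
        ih m (by omega)]
      have he : (m + 2 + 1) ^ 2 = (m + 1) ^ 2 + 4 * (m + 2) := by ring
      have h2 : 2 * m + 2 - m = m + 2 := by omega
      rw [h2, he]
      generalize (m + 1) ^ 2 = a
      omega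

theorem jaccard_reversal_auc {n : ℕ} (hn : 2 ≤ n) (r s : Fin n → ℝ)
    (hr : Function.Injective r) (hs : Function.Injective s)
    (hrev : ∀ x, rankOf s x = n + 1 - rankOf r x) :
    (1 / ((n : ℝ) - 1)) *
        ((jac r s 1 + jac r s n) / 2 + ∑ k ∈ Finset.Icc 2 (n - 1), jac r s k) =
      if Odd n then ((n : ℝ) ^ 2 + 1) / (4 * n * (n - 1))
      else (n : ℝ) / (4 * (n - 1)) := by
  have hn0 : (n : ℝ) ≠ 0 := by positivity
  have hn1 : (n : ℝ) - 1 ≠ 0 := by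
    have : (2 : ℝ) ≤ n := by exact_mod_cast hn
    nlinarith
  -- cardinality of topk
  have hcard : ∀ (t : Fin n → ℝ), Function.Injective t → ∀ k, 1 ≤ k → k ≤ n →
      (topk t k).card = k := by
    intro t ht k hk1 hkn
    rw [topk, card_filter_rank ht (fun a => a ≤ k)]
    have he : (Finset.Icc 1 n).filter (fun a => a ≤ k) = Finset.Icc 1 k := by
      ext a
      simp only [Finset.mem_filter, Finset.mem_Icc]
      omega
    rw [he, Nat.card_Icc]
    omega
  -- cardinality of the intersection
  have hinter : ∀ k, k ≤ n → (topk r k ∩ topk s k).card = 2 * k - n := by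
    intro k hkn
    have he : topk r k ∩ topk s k
        = Finset.univ.filter (fun i => rankOf r i ≤ k ∧ n + 1 - k ≤ rankOf r i) := by
      ext i
      simp only [topk, Finset.mem_inter, Finset.mem_filter, Finset.mem_univ, true_and,
        hrev i]
      have := rankOf_le r i
      omega
    rw [he, card_filter_rank hr (fun a => a ≤ k ∧ n + 1 - k ≤ a)]
    have he2 : (Finset.Icc 1 n).filter (fun a => a ≤ k ∧ n + 1 - k ≤ a)
        = Finset.Icc (n + 1 - k) k := by
      ext a
      simp only [Finset.mem_filter, Finset.mem_Icc]
      omega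
    rw [he2, Nat.card_Icc]
    omega
  -- jac closed form
  have hjac : ∀ k, 1 ≤ k → k ≤ n → jac r s k = ((2 * k - n : ℕ) : ℝ) / n := by
    intro k hk1 hkn
    have hu := Finset.card_union_add_card_inter (topk r k) (topk s k)
    rw [hinter k hkn, hcard r hr k hk1 hkn, hcard s hs k hk1 hkn] at hu
    unfold jac
    rw [hinter k hkn]
    by_cases h2 : n ≤ 2 * k
    · have he : (topk r k ∪ topk s k).card = n := by omega
      rw [he]
    · have hz : 2 * k - n = 0 := by omega
      rw [hz]
      simp
  have hjac1 : jac r s 1 = 0 := by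
    rw [hjac 1 le_rfl (by omega)]
    have : 2 * 1 - n = 0 := by omega
    rw [this]
    simp
  have hjacn : jac r s n = 1 := by
    rw [hjac n (by omega) le_rfl]
    have : 2 * n - n = n := by omega
    rw [this]
    exact div_self hn0
  -- the sum
  have hsum : ∑ k ∈ Finset.Icc 2 (n - 1), jac r s k
      = ((∑ k ∈ Finset.Icc 2 (n - 1), (2 * k - n) : ℕ) : ℝ) / n := by
    rw [Nat.cast_sum, Finset.sum_div]
    exact Finset.sum_congr rfl (fun k hk => by
      rw [Finset.mem_Icc] at hk
      exact hjac k (by omega) (by omega))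
  have hS : (∑ k ∈ Finset.Icc 2 (n - 1), (2 * k - n)) = (n - 1) ^ 2 / 4 := by
    have h1 : Finset.Icc 2 (n - 1) = Finset.Ico 2 n := by
      rw [← Finset.Ico_add_one_right_eq_Icc]
      congr 1
      omega
    rw [h1, Finset.sum_Ico_eq_sum_range]
    have hcongr : ∀ i ∈ Finset.range (n - 2),
        2 * (2 + i) - n = 2 * i + 2 - (n - 2) := fun i _ => by omega
    rw [Finset.sum_congr rfl hcongr, Fsum]
    have e2 : n - 2 + 1 = n - 1 := by omega
    rw [e2]
  rw [hjac1, hjacn, hsum, hS]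
  rcases Nat.even_or_odd n with heven | hodd
  · rw [if_neg (by simpa using heven)]
    obtain ⟨m, hm⟩ := heven
    obtain ⟨j, hj⟩ : ∃ j, n = 2 * j + 2 := ⟨m - 1, by omega⟩
    have hdiv : (n - 1) ^ 2 / 4 = j * j + j := by
      have e : (n - 1) ^ 2 = (j * j + j) * 4 + 1 := by
        have : n - 1 = 2 * j + 1 := by omega
        rw [this]; ring
      rw [e]
      generalize j * j + j = a
      omega
    rw [hdiv, hj]
    push_cast
    have h1 : (2 * (j : ℝ) + 2) - 1 ≠ 0 := by
      have : (0:ℝ) ≤ (j:ℝ) := Nat.cast_nonneg j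
      nlinarith
    have h2 : (2 * (j : ℝ) + 2) ≠ 0 := by positivity
    field_simp
    ring
  · rw [if_pos hodd]
    obtain ⟨m, hm⟩ := hodd
    have hdiv : (n - 1) ^ 2 / 4 = m * m := by
      have e : (n - 1) ^ 2 = (m * m) * 4 := by
        have : n - 1 = 2 * m := by omega
        rw [this]; ring
      rw [e]
      exact Nat.mul_div_cancel _ (by norm_num)
    have hm1 : 1 ≤ m := by omega
    rw [hdiv, hm]
    push_cast
    have h1 : (2 * (m : ℝ) + 1) - 1 ≠ 0 := by
      have : (1:ℝ) ≤ m := by exact_mod_cast hm1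
      nlinarith
    have h2 : (2 * (m : ℝ) + 1) ≠ 0 := by positivity
    field_simp
    ring
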